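/- Let λ, μ > 0 and let γ be the Gaussian probability measure on ℝ with mean 0 and variance T > 0. Suppose (u^n_t)_{n≥0} is defined on the space of finite Borel measures on ℝ by u⁰_t = e^{-(2λ+μ)t} f₀ and u^{n+1}_t = e^{-(2λ+μ)t} f₀ + ∫₀^t e^{-(2λ+μ)(t−s)} ( μ B[u^n_s, γ] + 2λ B[u^n_s, u^n_s] ) ds, where f₀ is a probability measure. Then for every t ≥ 0 and every n, u^n_t(ℝ) ≤ 1, and the sequence (u^n_t)_n is increasing in n (as measures). -/

import Mathlib

open MeasureTheory Real

/-- The uniform probability measure on `[0, 2π)`. -/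
noncomputable def thetaUnif : Measure ℝ :=
  (ENNReal.ofReal (2 * π))⁻¹ • (volume.restrict (Set.Ico 0 (2 * π)))

/-- The Kac collision map: `B[ν₁,ν₂]` is the law of `X cos θ + Y sin θ`
where `X ~ ν₁`, `Y ~ ν₂` and `θ` is uniform on `[0,2π)`, all independent. -/
noncomputable def collB (ν₁ ν₂ : Measure ℝ) : Measure ℝ :=
  Measure.map (fun p : ℝ × ℝ × ℝ => p.1 * Real.cos p.2.2 + p.2.1 * Real.sin p.2.2)
    (ν₁.prod (ν₂.prod thetaUnif))


lemma measurable_kac : Measurable (fun p : ℝ × ℝ × ℝ => p.1 * Real.cos p.2.2 + p.2.1 * Real.sin p.2.2) := by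
  fun_prop

instance : IsProbabilityMeasure thetaUnif := by
  constructor
  rw [thetaUnif]
  simp [Real.volume_Ico]
  rw [ENNReal.inv_mul_cancel (by positivity) (ENNReal.mul_ne_top (by simp) ENNReal.ofReal_ne_top)]

lemma prod_mono {α β : Type*} [MeasurableSpace α] [MeasurableSpace β]
    {μ μ' : Measure α} {ν ν' : Measure β} [SFinite ν] [SFinite ν'] (h1 : μ ≤ μ') (h2 : ν ≤ ν') :
    μ.prod ν ≤ μ'.prod ν' := by
  rw [Measure.le_iff]
  intro s hs
  rw [Measure.prod_apply hs, Measure.prod_apply hs]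
  exact lintegral_mono' h1 fun x => h2 _

lemma collB_mono {ν₁ ν₁' ν₂ ν₂' : Measure ℝ} [SFinite ν₂] [SFinite ν₂'] (h1 : ν₁ ≤ ν₁')
    (h2 : ν₂ ≤ ν₂') : collB ν₁ ν₂ ≤ collB ν₁' ν₂' :=
  Measure.map_mono (prod_mono (ν := ν₂.prod thetaUnif) (ν' := ν₂'.prod thetaUnif) h1 (prod_mono h2 le_rfl)) measurable_kac

lemma collB_univ (ν₁ ν₂ : Measure ℝ) [SFinite ν₂] :
    collB ν₁ ν₂ Set.univ = ν₁ Set.univ * ν₂ Set.univ := by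
  rw [collB, Measure.map_apply measurable_kac MeasurableSet.univ, Set.preimage_univ,
    ← Set.univ_prod_univ, Measure.prod_prod, ← Set.univ_prod_univ, Measure.prod_prod,
    measure_univ (μ := thetaUnif), mul_one]

lemma key_integral {c t : ℝ} (hc : 0 < c) (ht : 0 ≤ t) :
    ∫ s in Set.Icc (0 : ℝ) t, Real.exp (-c * (t - s)) * c = 1 - Real.exp (-c * t) := by
  rw [MeasureTheory.integral_Icc_eq_integral_Ioc, ← intervalIntegral.integral_of_le ht]
  have : ∀ s ∈ Set.uIcc (0:ℝ) t, HasDerivAt (fun s => Real.exp (-c * (t - s)))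
      (Real.exp (-c * (t - s)) * c) s := by
    intro s _
    have h1 : HasDerivAt (fun s : ℝ => -c * (t - s)) c s := by
      simpa using ((hasDerivAt_id s).const_sub t).const_mul (-c)
    simpa using h1.exp
  rw [intervalIntegral.integral_eq_sub_of_hasDerivAt this (Continuous.intervalIntegrable (by fun_prop) 0 t)]
  simp

open ProbabilityTheory in
theorem iteration_subprob_and_monotone
    (lam mu T : ℝ) (hlam : 0 < lam) (hmu : 0 < mu) (hT : 0 < T)
    (f₀ : Measure ℝ) [IsProbabilityMeasure f₀]
    (u : ℕ → ℝ → Measure ℝ)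
    (h0 : ∀ t : ℝ, ∀ A : Set ℝ, MeasurableSet A →
      u 0 t A = ENNReal.ofReal (Real.exp (-(2 * lam + mu) * t)) * f₀ A)
    (hrec : ∀ n : ℕ, ∀ t : ℝ, ∀ A : Set ℝ, MeasurableSet A →
      u (n + 1) t A = ENNReal.ofReal (Real.exp (-(2 * lam + mu) * t)) * f₀ A
        + ∫⁻ s in Set.Icc (0 : ℝ) t,
            ENNReal.ofReal (Real.exp (-(2 * lam + mu) * (t - s)))
              * (ENNReal.ofReal mu * collB (u n s) (gaussianReal 0 T.toNNReal) A
                + ENNReal.ofReal (2 * lam) * collB (u n s) (u n s) A)) :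
    ∀ n : ℕ, ∀ t : ℝ, 0 ≤ t →
      u n t Set.univ ≤ 1 ∧ ∀ A : Set ℝ, MeasurableSet A → u n t A ≤ u (n + 1) t A := by
  set c := 2 * lam + mu with hc_def
  have hc : 0 < c := by positivity
  -- exponential factor bounded by one for nonneg times
  have hexp1 : ∀ {r : ℝ}, 0 ≤ r → ENNReal.ofReal (Real.exp (-c * r)) ≤ 1 := by
    intro r hr
    calc ENNReal.ofReal (Real.exp (-c * r)) ≤ ENNReal.ofReal (Real.exp 0) := by
          apply ENNReal.ofReal_le_ofReal
          exact Real.exp_le_exp.mpr (by nlinarith)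
      _ = 1 := by simp
  -- key lintegral identity
  have hkey : ∀ {t : ℝ}, 0 ≤ t →
      (∫⁻ s in Set.Icc (0 : ℝ) t, ENNReal.ofReal (Real.exp (-c * (t - s))) * ENNReal.ofReal c)
        = ENNReal.ofReal (1 - Real.exp (-c * t)) := by
    intro t ht
    have : ∀ s : ℝ, ENNReal.ofReal (Real.exp (-c * (t - s))) * ENNReal.ofReal c
        = ENNReal.ofReal (Real.exp (-c * (t - s)) * c) := fun s =>
      (ENNReal.ofReal_mul (Real.exp_nonneg _)).symm
    simp_rw [this]
    rw [← ofReal_integral_eq_lintegral_ofReal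
      ((Continuous.integrableOn_Icc (by fun_prop)))
      (Filter.Eventually.of_forall fun s => by positivity), key_integral hc ht]
  -- mass of the sum inside the integral
  have hmass_step : ∀ n : ℕ, (∀ s : ℝ, 0 ≤ s → u n s Set.univ ≤ 1) →
      ∀ t : ℝ, 0 ≤ t → u (n + 1) t Set.univ ≤ 1 := by
    intro n hn t ht
    rw [hrec n t Set.univ MeasurableSet.univ]
    have hbound : ∫⁻ s in Set.Icc (0 : ℝ) t,
        ENNReal.ofReal (Real.exp (-c * (t - s)))
          * (ENNReal.ofReal mu * collB (u n s) (gaussianReal 0 T.toNNReal) Set.univ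
            + ENNReal.ofReal (2 * lam) * collB (u n s) (u n s) Set.univ)
        ≤ ∫⁻ s in Set.Icc (0 : ℝ) t,
            ENNReal.ofReal (Real.exp (-c * (t - s))) * ENNReal.ofReal c := by
      apply setLIntegral_mono' measurableSet_Icc
      intro s hs
      apply mul_le_mul_right
      haveI : IsFiniteMeasure (u n s) := ⟨lt_of_le_of_lt (hn s hs.1) ENNReal.one_lt_top⟩
      have h1 : collB (u n s) (gaussianReal 0 T.toNNReal) Set.univ ≤ 1 := by
        rw [collB_univ]
        simpa using hn s hs.1
      have h2 : collB (u n s) (u n s) Set.univ ≤ 1 := by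
        rw [collB_univ]
        exact mul_le_one' (hn s hs.1) (hn s hs.1)
      calc ENNReal.ofReal mu * collB (u n s) (gaussianReal 0 T.toNNReal) Set.univ
            + ENNReal.ofReal (2 * lam) * collB (u n s) (u n s) Set.univ
          ≤ ENNReal.ofReal mu * 1 + ENNReal.ofReal (2 * lam) * 1 :=
            add_le_add (mul_le_mul_right h1 _) (mul_le_mul_right h2 _)
        _ = ENNReal.ofReal c := by
            rw [mul_one, mul_one, ← ENNReal.ofReal_add hmu.le (by positivity)]
            congr 1
            rw [hc_def]; ring
    calc ENNReal.ofReal (Real.exp (-c * t)) * f₀ Set.univ + _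
        ≤ ENNReal.ofReal (Real.exp (-c * t)) + ENNReal.ofReal (1 - Real.exp (-c * t)) := by
          rw [measure_univ, mul_one]
          exact add_le_add_right (le_of_le_of_eq hbound (hkey ht)) _
      _ = 1 := by
          have h1 : Real.exp (-c * t) ≤ 1 := by
            rw [← Real.exp_zero]; exact Real.exp_le_exp.mpr (by nlinarith)
          rw [← ENNReal.ofReal_add (Real.exp_nonneg _) (by linarith)]
          norm_num
  intro n
  induction n with
  | zero =>
    intro t ht
    have h00 : u 0 t Set.univ ≤ 1 := by
      rw [h0 t Set.univ MeasurableSet.univ, measure_univ, mul_one]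
      exact hexp1 ht
    refine ⟨h00, fun A hA => ?_⟩
    rw [h0 t A hA, hrec 0 t A hA]
    exact le_add_right le_rfl
  | succ n ih =>
    intro t ht
    have hn_mass : ∀ s : ℝ, 0 ≤ s → u n s Set.univ ≤ 1 := fun s hs => (ih s hs).1
    have hsn_mass : ∀ s : ℝ, 0 ≤ s → u (n + 1) s Set.univ ≤ 1 := hmass_step n hn_mass
    refine ⟨hsn_mass t ht, fun A hA => ?_⟩
    rw [hrec n t A hA, hrec (n + 1) t A hA]
    apply add_le_add_right
    apply setLIntegral_mono' measurableSet_Icc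
    intro s hs
    apply mul_le_mul_right
    haveI : IsFiniteMeasure (u n s) := ⟨lt_of_le_of_lt (hn_mass s hs.1) ENNReal.one_lt_top⟩
    haveI : IsFiniteMeasure (u (n + 1) s) :=
      ⟨lt_of_le_of_lt (hsn_mass s hs.1) ENNReal.one_lt_top⟩
    have hle : u n s ≤ u (n + 1) s := Measure.le_iff.mpr ((ih s hs.1).2)
    exact add_le_add (mul_le_mul_right ((collB_mono hle le_rfl) A) _)
      (mul_le_mul_right ((collB_mono hle hle) A) _)
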